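/- arXiv:2410.18513 — 2 statements merged into one kernel-verified Lean document; each statement's English description precedes it below -/
import Mathlib

section
/- Let the sequence (τ_k) be defined by τ_1 = 1 and τ_{k+1} = (τ_k/2)(√(τ_k² + 4) - τ_k). Then for every k ≥ 1, 1/(k+1) ≤ τ_k ≤ 2/(k+1). -/
theorem tau_bounds (τ : ℕ → ℝ)
    (h1 : τ 1 = 1)
    (hrec : ∀ k : ℕ, 1 ≤ k → τ (k + 1) = (τ k / 2) * (Real.sqrt (τ k ^ 2 + 4) - τ k)) :
    ∀ k : ℕ, 1 ≤ k → 1 / ((k : ℝ) + 1) ≤ τ k ∧ τ k ≤ 2 / ((k : ℝ) + 1) := by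
  intro k
  induction k with
  | zero => intro h; omega
  | succ n ih =>
    intro _
    rcases Nat.eq_zero_or_pos n with hn | hn
    · subst hn
      rw [show (0:ℕ)+1 = 1 from rfl, h1]
      norm_num
    · obtain ⟨hl, hu⟩ := ih hn
      set t := τ n with ht_def
      set N : ℝ := (n : ℝ) + 1 with hN_def
      have hN1 : (1:ℝ) ≤ N := by
        have : (1:ℝ) ≤ (n:ℝ) := by exact_mod_cast hn
        linarith
      have ht0 : 0 < t := lt_of_lt_of_le (by positivity) hl
      have hl' : 1 / N ≤ t := hl
      have hu' : t ≤ 2 / N := hu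
      have hl2 : 1 ≤ t * N := by
        rw [div_le_iff₀ (by linarith)] at hl'; linarith
      have hu2 : t * N ≤ 2 := by
        rw [le_div_iff₀ (by linarith)] at hu'; linarith
      set s := Real.sqrt (t ^ 2 + 4) with hs_def
      have hssq : s ^ 2 = t ^ 2 + 4 := Real.sq_sqrt (by positivity)
      have hs0 : 0 < s := Real.sqrt_pos.mpr (by positivity)
      -- upper comparison: t*N ≤ s
      have hup : t * N ≤ s := by
        have h1' : (t * N) ^ 2 ≤ t ^ 2 + 4 := by nlinarith
        calc t * N = Real.sqrt ((t * N) ^ 2) := (Real.sqrt_sq (by positivity)).symm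
          _ ≤ s := Real.sqrt_le_sqrt h1'
      -- lower comparison: s ≤ t*(2N+1)
      have hlo : s ≤ t * (2 * N + 1) := by
        have h1' : t ^ 2 + 4 ≤ (t * (2 * N + 1)) ^ 2 := by nlinarith
        calc s ≤ Real.sqrt ((t * (2 * N + 1)) ^ 2) := Real.sqrt_le_sqrt h1'
          _ = t * (2 * N + 1) := Real.sqrt_sq (by positivity)
      have hrw : τ (n + 1) = (t / 2) * (s - t) := hrec n hn
      have hkey : (t / 2) * (s - t) * (s + t) = 2 * t := by nlinarith
      have hNn : ((n:ℝ) + 1) + 1 = N + 1 := by rw [hN_def]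
      constructor
      · rw [Nat.cast_succ, hNn, hrw, div_le_iff₀ (by linarith)]
        nlinarith [mul_pos ht0 (show (0:ℝ) < s + t by linarith)]
      · rw [Nat.cast_succ, hNn, hrw, le_div_iff₀ (by linarith)]
        nlinarith [mul_pos ht0 (show (0:ℝ) < s + t by linarith)]
end

section
/- Let λ ≥ 0, D > 0 and ẍ ∈ ℝ^n. Let x₀ᵘ ∈ ℝ^n be defined componentwise by (x₀ᵘ)_i = sign(ẍ_i)·max(|ẍ_i| - λ, 0). Then the minimizer of λ‖x‖₁ + (1/2)‖x - ẍ‖² over the Euclidean ball {x : ‖x‖ ≤ D} is x* = min(1, D/‖x₀ᵘ‖) · x₀ᵘ (with x* = 0 when x₀ᵘ = 0). -/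
lemma scalar_key (lam mu a y s : ℝ) (hlam : 0 ≤ lam) (hmu : 0 ≤ mu)
    (hs : (1 + mu) * s = Real.sign a * max (|a| - lam) 0) :
    lam * |s| + (1/2) * (s - a)^2 - mu * s * (y - s) + (1/2) * (y - s)^2 ≤
      lam * |y| + (1/2) * (y - a)^2 := by
  have h1 : 0 < 1 + mu := by linarith
  have hy1 : y ≤ |y| := le_abs_self y
  have hy2 : -y ≤ |y| := neg_le_abs y
  rcases lt_trichotomy a 0 with ha | ha | ha
  · rw [Real.sign_of_neg ha, abs_of_neg ha] at hs
    rcases le_or_gt (-a - lam) 0 with hm | hm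
    · rw [max_eq_right hm] at hs
      have hs0 : s = 0 := by
        have := h1.ne'
        field_simp at hs
        nlinarith
      subst hs0
      have hay : a * y ≤ lam * |y| := by
        rcases abs_cases y with ⟨h, _⟩ | ⟨h, _⟩ <;> nlinarith
      simp only [abs_zero]; nlinarith
    · rw [max_eq_left hm.le] at hs
      have hs' : (1 + mu) * s = a + lam := by linarith
      have hsneg : s < 0 := by nlinarith
      rw [abs_of_neg hsneg]
      have key : (1 + mu) * s * (y - s) = (a + lam) * (y - s) := by rw [hs']
      nlinarith [mul_nonneg hlam (by linarith : (0:ℝ) ≤ |y| + y)]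
  · subst ha
    simp only [Real.sign_zero, zero_mul] at hs
    have hs0 : s = 0 := by nlinarith
    subst hs0
    simp only [abs_zero]
    nlinarith [abs_nonneg y, mul_nonneg hlam (abs_nonneg y)]
  · rw [Real.sign_of_pos ha, abs_of_pos ha] at hs
    rcases le_or_gt (a - lam) 0 with hm | hm
    · rw [max_eq_right hm] at hs
      have hs0 : s = 0 := by nlinarith
      subst hs0
      have hay : a * y ≤ lam * |y| := by
        rcases abs_cases y with ⟨h, _⟩ | ⟨h, _⟩ <;> nlinarith
      simp only [abs_zero]; nlinarith
    · rw [max_eq_left hm.le] at hs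
      have hs' : (1 + mu) * s = a - lam := by linarith
      have hspos : 0 < s := by nlinarith
      rw [abs_of_pos hspos]
      have key : (1 + mu) * s * (y - s) = (a - lam) * (y - s) := by rw [hs']
      nlinarith [mul_nonneg hlam (by linarith : (0:ℝ) ≤ |y| - y)]

theorem l1_prox_on_l2_ball (n : ℕ) (lam D : ℝ) (hlam : 0 ≤ lam) (hD : 0 < D)
    (xdd x0u xstar : EuclideanSpace ℝ (Fin n))
    (hx0u : ∀ i, x0u i = Real.sign (xdd i) * max (|xdd i| - lam) 0)
    (hxstar : xstar = min 1 (D / ‖x0u‖) • x0u) :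
    ‖xstar‖ ≤ D ∧
    ∀ x : EuclideanSpace ℝ (Fin n), ‖x‖ ≤ D →
      lam * (∑ i, |xstar i|) + (1 / 2) * ‖xstar - xdd‖ ^ 2 ≤
        lam * (∑ i, |x i|) + (1 / 2) * ‖x - xdd‖ ^ 2 := by
  have hnsq : ∀ v : EuclideanSpace ℝ (Fin n), ‖v‖ ^ 2 = ∑ i, (v i) ^ 2 := by
    intro v
    rw [EuclideanSpace.norm_eq, Real.sq_sqrt (Finset.sum_nonneg fun i _ => sq_nonneg _)]
    simp [sq_abs]
  have hN : 0 ≤ ‖x0u‖ := norm_nonneg _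
  have hmin0 : 0 ≤ min 1 (D / ‖x0u‖) := le_min one_pos.le (div_nonneg hD.le hN)
  have hnx : ‖xstar‖ = min 1 (D / ‖x0u‖) * ‖x0u‖ := by
    rw [hxstar, norm_smul, Real.norm_eq_abs, abs_of_nonneg hmin0]
  have hxD : ‖xstar‖ ≤ D := by
    rw [hnx]
    rcases eq_or_lt_of_le hN with h0 | h0
    · rw [← h0, mul_zero]; exact hD.le
    · calc min 1 (D / ‖x0u‖) * ‖x0u‖ ≤ (D / ‖x0u‖) * ‖x0u‖ :=
            mul_le_mul_of_nonneg_right (min_le_right _ _) hN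
        _ = D := div_mul_cancel₀ _ h0.ne'
  refine ⟨hxD, ?_⟩
  intro x hx
  obtain ⟨mu, hmu, hmus, hslack⟩ :
      ∃ mu : ℝ, 0 ≤ mu ∧ (∀ i, (1 + mu) * xstar i = x0u i) ∧
        mu * (∑ i, xstar i * (x i - xstar i)) ≤ 0 := by
    rcases le_or_gt ‖x0u‖ D with hND | hND
    · refine ⟨0, le_refl _, ?_, by simp⟩
      intro i
      rcases eq_or_lt_of_le hN with h0 | h0
      · have hz : x0u = 0 := norm_eq_zero.mp h0.symm
        rw [hxstar, hz]; simp
      · have hm1 : min 1 (D / ‖x0u‖) = 1 := min_eq_left ((one_le_div h0).2 hND)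
        rw [hxstar, hm1, one_smul]; ring
    · have h0 : 0 < ‖x0u‖ := lt_trans hD hND
      have hm1 : min 1 (D / ‖x0u‖) = D / ‖x0u‖ := min_eq_right ((div_le_one h0).2 hND.le)
      refine ⟨‖x0u‖ / D - 1, by
        have : 1 ≤ ‖x0u‖ / D := (one_le_div hD).2 hND.le
        linarith, ?_, ?_⟩
      · intro i
        have : xstar i = (D / ‖x0u‖) * x0u i := by
          rw [hxstar, hm1]; simp [PiLp.smul_apply]
        rw [this]
        field_simp
        ring
      · have hns : ‖xstar‖ = D := by
          rw [hnx, hm1, div_mul_cancel₀ _ h0.ne']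
        have hinner : ∑ i, xstar i * x i ≤ D * D := by
          have h1 := real_inner_le_norm xstar x
          have h2 : (inner ℝ xstar x : ℝ) = ∑ i, xstar i * x i := by
            simp [PiLp.inner_apply, RCLike.inner_apply, conj_trivial, mul_comm]
          rw [h2, hns] at h1
          calc ∑ i, xstar i * x i ≤ D * ‖x‖ := h1
            _ ≤ D * D := mul_le_mul_of_nonneg_left hx hD.le
        have hsq : ∑ i, xstar i ^ 2 = D ^ 2 := by rw [← hnsq xstar, hns]
        have hle : ∑ i, xstar i * (x i - xstar i) ≤ 0 := by
          have : ∑ i, xstar i * (x i - xstar i)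
              = (∑ i, xstar i * x i) - ∑ i, xstar i ^ 2 := by
            rw [← Finset.sum_sub_distrib]; congr 1; ext i; ring
          rw [this, hsq]
          nlinarith
        refine mul_nonpos_of_nonneg_of_nonpos ?_ hle
        have : 1 ≤ ‖x0u‖ / D := (one_le_div hD).2 hND.le
        linarith
  have hsum : ∀ i ∈ Finset.univ (α := Fin n),
      lam * |xstar i| + (1/2) * (xstar i - xdd i)^2 - mu * xstar i * (x i - xstar i)
        + (1/2) * (x i - xstar i)^2 ≤ lam * |x i| + (1/2) * (x i - xdd i)^2 := by
    intro i _
    exact scalar_key lam mu (xdd i) (x i) (xstar i) hlam hmu (by rw [hmus i, hx0u i])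
  have hS := Finset.sum_le_sum hsum
  have e1 : ‖xstar - xdd‖ ^ 2 = ∑ i, (xstar i - xdd i) ^ 2 := by
    rw [hnsq]
    exact Finset.sum_congr rfl fun i _ => by simp
  have e2 : ‖x - xdd‖ ^ 2 = ∑ i, (x i - xdd i) ^ 2 := by
    rw [hnsq]
    exact Finset.sum_congr rfl fun i _ => by simp
  have e3 : 0 ≤ ∑ i, (x i - xstar i) ^ 2 := Finset.sum_nonneg fun i _ => sq_nonneg _
  simp only [Finset.sum_add_distrib, Finset.sum_sub_distrib, ← Finset.mul_sum] at hS
  have hslack' : (∑ i, mu * xstar i * (x i - xstar i)) ≤ 0 := by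
    calc (∑ i, mu * xstar i * (x i - xstar i))
        = mu * ∑ i, xstar i * (x i - xstar i) := by
          rw [Finset.mul_sum]; exact Finset.sum_congr rfl fun i _ => by ring
      _ ≤ 0 := hslack
  rw [e1, e2]
  linarith [hS, hslack', e3]
end
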